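/- Term Reducibility: for a closed lambda term M, the following are equivalent: (1) M →v^n N with N a CBV normal form; (2) ⌊M⌋ →^n t in Φ with t a Φ-normal form and ⌈t⌉ = N. In particular, the number of reduction steps is exactly preserved. -/

import Mathlib

/-- Pure untyped λ-terms with named variables. -/
inductive Tm : Type
  | var : ℕ → Tm
  | lam : ℕ → Tm → Tm
  | app : Tm → Tm → Tm
deriving DecidableEq

namespace Tm

/-- Free variables. -/
def fv : Tm → Finset ℕ
  | var x => {x}
  | lam x M => fv M \ {x}
  | app M N => fv M ∪ fv N

/-- A term is closed when it has no free variables. -/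
def Closed (M : Tm) : Prop := fv M = ∅

/-- Values: variables and abstractions. -/
def IsValue : Tm → Prop
  | var _ => True
  | lam _ _ => True
  | app _ _ => False

/-- (Naive) substitution `M{N/x}`. -/
def subst : Tm → ℕ → Tm → Tm
  | var y, x, N => if y = x then N else var y
  | lam y P, x, N => if y = x then lam y P else lam y (subst P x N)
  | app P Q, x, N => app (subst P x N) (subst Q x N)

/-- Weak call-by-value reduction: β-redexes whose argument is a value,
closed under both application contexts, never under λ. -/
inductive Cbv : Tm → Tm → Prop
  | beta {x M V} : IsValue V → Cbv (app (lam x M) V) (subst M x V)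
  | appL {M N L} : Cbv M N → Cbv (app M L) (app N L)
  | appR {M N L} : Cbv M N → Cbv (app L M) (app L N)

/-- The subterm relation on λ-terms. -/
inductive Sub : Tm → Tm → Prop
  | refl (M) : Sub M M
  | lam {M N x} : Sub M N → Sub M (lam x N)
  | appL {M N L} : Sub M N → Sub M (app N L)
  | appR {M N L} : Sub M L → Sub M (app N L)

end Tm

namespace Tm

theorem fv_subst (M : Tm) (x : ℕ) (N : Tm) : fv (subst M x N) ⊆ (fv M \ {x}) ∪ fv N := by
  induction M with
  | var y =>
    simp only [subst]; split
    · intro z hz; exact Finset.mem_union_right _ hz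
    · rename_i h; intro z hz; simp [fv] at hz ⊢; left; simpa [hz] using h
  | lam y P ih =>
    simp only [subst]; split
    · rename_i h; subst h; intro z hz; simp [fv] at hz ⊢; tauto
    · rename_i h; intro z hz; simp [fv] at hz ⊢
      rcases hz with ⟨hz1, hz2⟩
      have := ih hz1; simp at this; tauto
  | app P Q ihP ihQ =>
    simp only [subst, fv]; intro z hz; simp at hz ⊢
    rcases hz with h | h
    · have := ihP h; simp at this; tauto
    · have := ihQ h; simp at this; tauto

theorem subst_not_free {M : Tm} {x : ℕ} (h : x ∉ fv M) (N : Tm) : subst M x N = M := by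
  induction M with
  | var y => simp [fv] at h; simp [subst, Ne.symm h]
  | lam y P ih =>
    simp only [subst]; split
    · rfl
    · rename_i hyx; simp [fv, hyx] at h
      rw [ih (by intro hx; exact hyx ((h hx).symm))]
  | app P Q ihP ihQ => simp [fv] at h; simp [subst, ihP h.1, ihQ h.2]

theorem subst_var_self (M : Tm) (x : ℕ) : subst M x (var x) = M := by
  induction M with
  | var y => simp only [subst]; split <;> simp_all
  | lam y P ih => simp only [subst]; split; rfl; rw [ih]
  | app P Q ihP ihQ => simp [subst, ihP, ihQ]

theorem subst_comm {A N w : Tm} {x y : ℕ} (hxy : x ≠ y) (hxw : x ∉ fv w)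
    (hyN : y ∉ fv N) : subst (subst A x N) y w = subst (subst A y w) x N := by
  induction A with
  | var z =>
    by_cases hzx : z = x
    · subst hzx
      simp [subst, hxy, subst_not_free hyN]
    · by_cases hzy : z = y
      · subst hzy; simp [subst, hzx, Ne.symm hxy, subst_not_free hxw]
      · simp [subst, hzx, hzy]
  | lam z P ih =>
    by_cases hzx : z = x
    · simp [subst, hzx, hxy]
    · by_cases hzy : z = y
      · simp [subst, hzx, hzy, Ne.symm hxy]
      · simp [subst, hzx, hzy, ih]
  | app P Q ihP ihQ => simp [subst, ihP, ihQ]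

end Tm


/-- `M N₁ … Nₖ` (left-nested application). -/
def appList : Tm → List Tm → Tm := List.foldl Tm.app

/-- `λx₁.…λxₖ.M`. -/
def lams : List ℕ → Tm → Tm := fun xs M => xs.foldr Tm.lam M

/-- `stepsN R n a b`: `a` reduces to `b` in exactly `n` `R`-steps. -/
def stepsN {α : Type*} (R : α → α → Prop) : ℕ → α → α → Prop
  | 0, a, b => a = b
  | n + 1, a, b => ∃ c, R a c ∧ stepsN R n c b

/-- `a` is an `R`-normal form. -/
def NormalForm {α : Type*} (R : α → α → Prop) (a : α) : Prop := ¬ ∃ b, R a b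

/-- Terms of the constructor rewrite system Φ: variables, the binary function
symbol `app`, and a constructor `c_{x,M}` for each variable `x` and λ-term `M`. -/
inductive PTm : Type
  | pvar : ℕ → PTm
  | papp : PTm → PTm → PTm
  | con : ℕ → Tm → List PTm → PTm

namespace PTm

/-- The (sorted) list of free variables of a λ-term. -/
def fvList (M : Tm) : List ℕ := (Tm.fv M).sort (· ≤ ·)

/-- The translation `⌊·⌋` from λ-terms to Φ-terms. -/
def toP : Tm → PTm
  | .var x => pvar x
  | .lam x M => con x M ((fvList (Tm.lam x M)).map pvar)
  | .app M N => papp (toP M) (toP N)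

/-- Simultaneous (sequential, for closed arguments) λ-substitution `M{Nᵢ/xᵢ}`. -/
def substList (M : Tm) (xs : List ℕ) (Ns : List Tm) : Tm :=
  (xs.zip Ns).foldl (fun acc p => Tm.subst acc p.1 p.2) M

/-- The readback `⌈·⌉` from Φ-terms to λ-terms. -/
def toL : PTm → Tm
  | pvar x => .var x
  | papp u v => .app (toL u) (toL v)
  | con x M ts =>
      substList (Tm.lam x M) (fvList (Tm.lam x M)) (ts.attach.map fun t => toL t.1)
termination_by t => sizeOf t
decreasing_by all_goals first
  | (simp_wf; have := List.sizeOf_lt_of_mem t.2; omega)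
  | (simp_wf; omega)
  | simp_wf

/-- First-order substitution on Φ-terms. -/
def psubst : PTm → ℕ → PTm → PTm
  | pvar y, x, N => if y = x then N else pvar y
  | papp u v, x, N => papp (psubst u x N) (psubst v x N)
  | con y M ts, x, N => con y M (ts.attach.map fun t => psubst t.1 x N)
termination_by t _ _ => sizeOf t
decreasing_by all_goals first
  | (simp_wf; have := List.sizeOf_lt_of_mem t.2; omega)
  | (simp_wf; omega)
  | simp_wf

/-- Simultaneous (sequential, for ground arguments) substitution on Φ-terms. -/
def psubstList (t : PTm) (xs : List ℕ) (us : List PTm) : PTm :=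
  (xs.zip us).foldl (fun acc p => psubst acc p.1 p.2) t

/-- Constructor terms of Φ: ground terms built from constructors only. -/
inductive IsConT : PTm → Prop
  | con {x M ts} : (∀ t ∈ ts, IsConT t) → IsConT (con x M ts)

/-- Well-formed Φ-terms: every constructor `c_{x,M}` gets exactly
`|FV(λx.M)|` arguments. -/
inductive WF : PTm → Prop
  | pvar (x) : WF (pvar x)
  | papp {u v} : WF u → WF v → WF (papp u v)
  | con {x M ts} : ts.length = (fvList (Tm.lam x M)).length →
      (∀ t ∈ ts, WF t) → WF (con x M ts)

/-- Canonical closed Φ-terms: constructor terms, or `app` of canonical terms. -/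
inductive Canonical : PTm → Prop
  | ofCon {t} : IsConT t → Canonical t
  | papp {u v} : Canonical u → Canonical v → Canonical (papp u v)

/-- Call-by-value rewriting in Φ: the rules are
`app(c_{x,M}(x₁,…,xₙ), x) → ⌊M⌋` (with `FV(λx.M) = x₁,…,xₙ`), matched
variables are instantiated by constructor terms, and rewriting is closed
under arbitrary contexts. -/
inductive Step : PTm → PTm → Prop
  | beta {x : ℕ} {M : Tm} {ts : List PTm} {v : PTm} :
      (∀ t ∈ ts, IsConT t) → IsConT v →
      ts.length = (fvList (Tm.lam x M)).length →
      Step (papp (con x M ts) v)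
        (psubstList (toP M) (fvList (Tm.lam x M) ++ [x]) (ts ++ [v]))
  | appL {u u' v} : Step u u' → Step (papp u v) (papp u' v)
  | appR {u v v'} : Step v v' → Step (papp u v) (papp u v')
  | conArg {x M t t' l r} : Step t t' →
      Step (con x M (l ++ t :: r)) (con x M (l ++ t' :: r))

/-- Variables occurring in a Φ-term. -/
def pvarsOf : PTm → Finset ℕ
  | pvar x => {x}
  | papp u v => pvarsOf u ∪ pvarsOf v
  | con _ _ ts => ts.attach.foldr (fun t s => pvarsOf t.1 ∪ s) ∅
termination_by t => sizeOf t
decreasing_by all_goals first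
  | (simp_wf; have := List.sizeOf_lt_of_mem t.2; omega)
  | (simp_wf; omega)
  | simp_wf

/-- The subterm relation on Φ-terms. -/
inductive PSub : PTm → PTm → Prop
  | refl (t) : PSub t t
  | appL {t u v} : PSub t u → PSub t (papp u v)
  | appR {t u v} : PSub t v → PSub t (papp u v)
  | conArg {t u x M ts} : u ∈ ts → PSub t u → PSub t (con x M ts)

end PTm

namespace PTm
open Tm

theorem substList_nil (M : Tm) (Ns : List Tm) : substList M [] Ns = M := rfl
theorem substList_nil' (M : Tm) (xs : List ℕ) : substList M xs [] = M := by
  cases xs <;> rfl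
theorem substList_cons (M : Tm) (x : ℕ) (xs : List ℕ) (N : Tm) (Ns : List Tm) :
    substList M (x :: xs) (N :: Ns) = substList (Tm.subst M x N) xs Ns := rfl

theorem substList_append {xs ys : List ℕ} {Ns Ms : List Tm} (h : xs.length = Ns.length)
    (M : Tm) : substList M (xs ++ ys) (Ns ++ Ms) = substList (substList M xs Ns) ys Ms := by
  induction xs generalizing Ns M with
  | nil => cases Ns with
    | nil => simp [substList_nil]
    | cons => simp at h
  | cons x xs ih =>
    cases Ns with
    | nil => simp at h
    | cons N Ns =>
      simp only [List.cons_append, substList_cons]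
      exact ih (by simpa using h) _

theorem substList_lam {x : ℕ} {xs : List ℕ} (h : x ∉ xs) (L : Tm) (Ns : List Tm) :
    substList (Tm.lam x L) xs Ns = Tm.lam x (substList L xs Ns) := by
  induction xs generalizing Ns L with
  | nil => simp [substList_nil]
  | cons y ys ih =>
    cases Ns with
    | nil => simp [substList_nil']
    | cons N Ns =>
      simp only [substList_cons]
      have hyx : y ≠ x := by rintro rfl; exact h (by simp)
      rw [show Tm.subst (Tm.lam x L) y N = Tm.lam x (Tm.subst L y N) by
        simp [Tm.subst, Ne.symm hyx]]
      exact ih (fun hx => h (by simp [hx])) _ _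

theorem not_mem_fv_substList {y : ℕ} {xs : List ℕ} {Ns : List Tm} {M : Tm}
    (hM : y ∉ Tm.fv M) (hNs : ∀ N ∈ Ns, y ∉ Tm.fv N) :
    y ∉ Tm.fv (substList M xs Ns) := by
  induction xs generalizing Ns M with
  | nil => simpa [substList_nil] using hM
  | cons x xs ih =>
    cases Ns with
    | nil => simpa [substList_nil'] using hM
    | cons N Ns =>
      rw [substList_cons]
      refine ih ?_ (fun N hN => hNs N (by simp [hN]))
      intro hy
      have := Tm.fv_subst M x N hy
      simp at this
      rcases this with ⟨h1, _⟩ | h2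
      · exact hM h1
      · exact hNs N (by simp) h2

theorem fv_substList_closed {xs : List ℕ} {Ns : List Tm} {M : Tm}
    (hNs : ∀ N ∈ Ns, Tm.fv N = ∅) (hlen : xs.length = Ns.length) :
    Tm.fv (substList M xs Ns) ⊆ Tm.fv M \ xs.toFinset := by
  induction xs generalizing Ns M with
  | nil => cases Ns with
    | nil => simp [substList_nil]
    | cons => simp at hlen
  | cons x xs ih =>
    cases Ns with
    | nil => simp at hlen
    | cons N Ns =>
      rw [substList_cons]
      intro z hz
      have h1 := ih (M := Tm.subst M x N) (fun N hN => hNs N (by simp [hN]))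
        (by simpa using hlen) hz
      simp at h1
      have h2 := Tm.fv_subst M x N h1.1
      simp [hNs N (by simp)] at h2
      simp [h2.1, h2.2, h1.2]

theorem subst_substList_swap {y : ℕ} {w : Tm} {xs : List ℕ} {Ns : List Tm}
    (hw : Tm.fv w = ∅) (h : ∀ p ∈ xs.zip Ns, p.1 ≠ y ∧ y ∉ Tm.fv p.2) (M : Tm) :
    Tm.subst (substList M xs Ns) y w = substList (Tm.subst M y w) xs Ns := by
  induction xs generalizing Ns M with
  | nil => simp [substList_nil]
  | cons x xs ih =>
    cases Ns with
    | nil => simp [substList_nil']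
    | cons N Ns =>
      have hp := h (x, N) (by simp)
      rw [substList_cons, substList_cons, ih (fun p hp => h p (by simp [hp])),
        Tm.subst_comm hp.1 (by simp [hw]) hp.2]

-- PTm basics
theorem toL_pvar (x : ℕ) : toL (pvar x) = Tm.var x := by simp [toL]
theorem toL_papp (u v : PTm) : toL (papp u v) = Tm.app (toL u) (toL v) := by simp [toL]
theorem toL_con (x : ℕ) (M : Tm) (ts : List PTm) :
    toL (con x M ts) = substList (Tm.lam x M) (fvList (Tm.lam x M)) (ts.map toL) := by
  rw [toL]
  congr 1
  exact List.attach_map_val (l := ts) (f := toL)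

theorem psubst_pvar (z x : ℕ) (u : PTm) :
    psubst (pvar z) x u = if z = x then u else pvar z := by simp [psubst]
theorem psubst_papp (a b : PTm) (x : ℕ) (u : PTm) :
    psubst (papp a b) x u = papp (psubst a x u) (psubst b x u) := by simp [psubst]
theorem psubst_con (y : ℕ) (M : Tm) (ts : List PTm) (x : ℕ) (u : PTm) :
    psubst (con y M ts) x u = con y M (ts.map (fun t => psubst t x u)) := by
  rw [psubst]
  congr 1
  exact List.attach_map_val (l := ts) (f := fun t => psubst t x u)

/-- Variables occurring in a Φ-term (our own version). -/
def pv : PTm → Finset ℕ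
  | pvar x => {x}
  | papp u v => pv u ∪ pv v
  | con _ _ ts => (ts.attach.map fun t => pv t.1).foldr (· ∪ ·) ∅
termination_by t => sizeOf t
decreasing_by all_goals first
  | (simp_wf; have := List.sizeOf_lt_of_mem t.2; omega)
  | (simp_wf; omega)
  | simp_wf

theorem pv_con (x : ℕ) (M : Tm) (ts : List PTm) :
    pv (con x M ts) = ((ts.map pv).foldr (· ∪ ·) ∅) := by
  rw [pv]; congr 1; exact List.attach_map_val (l := ts) (f := pv)

theorem mem_pv_con {z x : ℕ} {M : Tm} {ts : List PTm} :
    z ∈ pv (con x M ts) ↔ ∃ t ∈ ts, z ∈ pv t := by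
  rw [pv_con]
  induction ts with
  | nil => simp
  | cons t ts ih => simp [ih]

/-- Ground constructor terms with the right arities. -/
inductive GCon : PTm → Prop
  | con {x M ts} : ts.length = (fvList (Tm.lam x M)).length →
      (∀ t ∈ ts, GCon t) → GCon (con x M ts)

/-- Mixed terms: partially instantiated translations. -/
inductive Mix : PTm → Prop
  | pvar (x) : Mix (pvar x)
  | papp {u v} : Mix u → Mix v → Mix (papp u v)
  | con {x M ts} :
      List.Forall₂ (fun z t => t = pvar z ∨ GCon t) (fvList (Tm.lam x M)) ts →
      Mix (con x M ts)

/-- Canonical terms (our version). -/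
inductive Can : PTm → Prop
  | gcon {t} : GCon t → Can t
  | papp {u v} : Can u → Can v → Can (papp u v)

theorem isConT_of_gCon {t : PTm} (h : GCon t) : IsConT t := by
  induction h with
  | con _ _ ih => exact IsConT.con ih

theorem pv_gcon {t : PTm} (h : GCon t) : pv t = ∅ := by
  induction h with
  | @con x M ts hlen hts ih =>
    ext z
    simp only [mem_pv_con, Finset.notMem_empty, iff_false, not_exists]
    rintro t ⟨ht, hz⟩
    rw [ih t ht] at hz; simp at hz

theorem psubst_gcon {t : PTm} (h : GCon t) (y : ℕ) (u : PTm) : psubst t y u = t := by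
  induction h with
  | @con x M ts hlen hts ih =>
    rw [psubst_con]
    conv_rhs => rw [← List.map_id ts]
    exact congrArg _ (List.map_congr_left (fun t ht => ih t ht))

theorem mix_of_gcon {t : PTm} (h : GCon t) : Mix t := by
  cases h with
  | con hlen hts =>
    refine Mix.con ?_
    rename_i x M ts
    rw [List.forall₂_iff_zip]
    exact ⟨hlen.symm, fun ht => Or.inr (hts _ (List.of_mem_zip ht).2)⟩

theorem fvList_nodup (M : Tm) : (fvList M).Nodup := Finset.sort_nodup _ _
theorem mem_fvList {z : ℕ} {M : Tm} : z ∈ fvList M ↔ z ∈ Tm.fv M := Finset.mem_sort _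
theorem fvList_toFinset (M : Tm) : (fvList M).toFinset = Tm.fv M := Finset.sort_toFinset _ _
theorem binder_not_mem_fvList (x : ℕ) (M : Tm) : x ∉ fvList (Tm.lam x M) := by
  rw [mem_fvList]; simp [Tm.fv]

theorem fv_sub_fvList (x : ℕ) (M : Tm) :
    Tm.fv M ⊆ (fvList (Tm.lam x M)).toFinset ∪ {x} := by
  rw [fvList_toFinset]
  intro z hz
  by_cases hzx : z = x <;> simp [Tm.fv, hz, hzx]

/-- Readback of the identity substitution. -/
theorem substList_vars (M : Tm) (xs : List ℕ) :
    substList M xs (xs.map Tm.var) = M := by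
  induction xs generalizing M with
  | nil => rfl
  | cons x xs ih => simpa [substList_cons, Tm.subst_var_self] using ih _

theorem toL_toP (M : Tm) : toL (toP M) = M := by
  induction M with
  | var x => simp [toP, toL_pvar]
  | lam x P _ =>
    rw [toP, toL_con, List.map_map]
    have : (toL ∘ pvar) = Tm.var := by funext z; simp [toL_pvar]
    rw [this, substList_lam (binder_not_mem_fvList x P), substList_vars]
  | app P Q ihP ihQ => rw [toP, toL_papp, ihP, ihQ]

theorem mix_toP (M : Tm) : Mix (toP M) := by
  induction M with
  | var x => exact Mix.pvar x
  | lam x P _ =>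
    refine Mix.con ?_
    rw [List.forall₂_map_right_iff]
    rw [List.forall₂_same]
    intro z _
    exact Or.inl rfl
  | app P Q ihP ihQ => exact Mix.papp ihP ihQ

theorem gcon_toL {t : PTm} (h : GCon t) :
    (∃ x B, toL t = Tm.lam x B) ∧ Tm.fv (toL t) = ∅ := by
  induction h with
  | @con x M ts hlen hts ih =>
    rw [toL_con, substList_lam (binder_not_mem_fvList x M)]
    constructor
    · exact ⟨x, _, rfl⟩
    · have hsub := fv_substList_closed (M := Tm.lam x M)
        (Ns := ts.map toL) (xs := fvList (Tm.lam x M))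
        (by rintro N hN; simp at hN; obtain ⟨t, ht, rfl⟩ := hN; exact (ih t ht).2)
        (by simp [hlen])
      rw [← substList_lam (binder_not_mem_fvList x M)]
      rw [fvList_toFinset] at hsub
      simp only [Finset.sdiff_self] at hsub
      exact Finset.subset_empty.mp hsub

theorem gcon_toL_closed {t : PTm} (h : GCon t) : Tm.fv (toL t) = ∅ := (gcon_toL h).2

theorem gcon_toL_value {t : PTm} (h : GCon t) : Tm.IsValue (toL t) := by
  obtain ⟨x, B, hB⟩ := (gcon_toL h).1
  rw [hB]; trivial

theorem forall₂_mem_right {R : ℕ → PTm → Prop} {xs : List ℕ} {ts : List PTm}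
    (h : List.Forall₂ R xs ts) : ∀ t ∈ ts, ∃ z ∈ xs, R z t := by
  induction h with
  | nil => simp
  | cons hR _ ih =>
    intro t ht
    rcases List.mem_cons.mp ht with rfl | ht
    · exact ⟨_, by simp, hR⟩
    · obtain ⟨z, hz, hzt⟩ := ih t ht
      exact ⟨z, by simp [hz], hzt⟩

/-- The core commutation lemma. -/
theorem core {y : ℕ} {u : PTm} (hu : GCon u) :
    ∀ (xs : List ℕ) (ts : List PTm) (M : Tm), xs.Nodup →
    List.Forall₂ (fun z t => t = pvar z ∨ GCon t) xs ts →
    (y ∉ Tm.fv M ∨ y ∈ xs) →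
    Tm.subst (substList M xs (ts.map toL)) y (toL u)
      = substList M xs (ts.map (fun t => toL (psubst t y u))) := by
  intro xs ts M hnd hf hy
  induction hf generalizing M with
  | nil =>
    simp only [List.map_nil, substList_nil']
    rcases hy with h | h
    · exact Tm.subst_not_free h _
    · simp at h
  | @cons x t xs ts hxt htl ih =>
    have hxs : x ∉ xs := (List.nodup_cons.mp hnd).1
    have hnd' : xs.Nodup := (List.nodup_cons.mp hnd).2
    simp only [List.map_cons, substList_cons]
    by_cases hxy : x = y
    · subst hxy
      rcases hxt with rfl | hg
      · -- pvar case: use swap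
        rw [toL_pvar, Tm.subst_var_self, psubst_pvar, if_pos rfl]
        have hmap : ts.map (fun t => toL (psubst t x u)) = ts.map toL := by
          refine List.map_congr_left fun t ht => ?_
          rcases forall₂_mem_right htl t ht with ⟨z, hz, rfl | hg⟩
          · rw [psubst_pvar, if_neg (fun h : z = x => hxs (h ▸ hz))]
          · rw [psubst_gcon hg]
        rw [hmap]
        refine subst_substList_swap (gcon_toL_closed hu) ?_ M
        intro p hp
        rw [List.zip_map_right] at hp
        obtain ⟨⟨z, t⟩, hzt, rfl⟩ := List.mem_map.mp hp
        have hzxs : z ∈ xs := (List.of_mem_zip hzt).1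
        have hrel := (List.forall₂_iff_zip.mp htl).2 hzt
        simp only [Prod.map, id]
        refine ⟨?_, ?_⟩
        · intro h; exact hxs (h ▸ hzxs)
        rcases hrel with rfl | hg
        · rw [toL_pvar]; simp [Tm.fv]; exact fun h => hxs (h ▸ hzxs)
        · rw [gcon_toL_closed hg]; simp
      · -- GCon case
        rw [psubst_gcon hg]
        have h1 : x ∉ Tm.fv (Tm.subst M x (toL t)) := by
          intro hc
          have := Tm.fv_subst M x (toL t) hc
          simp [gcon_toL_closed hg] at this
        exact ih _ hnd' (Or.inl h1)
    · -- x ≠ y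
      have ht' : toL (psubst t y u) = toL t := by
        rcases hxt with rfl | hg
        · rw [psubst_pvar, if_neg hxy]
        · rw [psubst_gcon hg]
      rw [ht']
      refine ih _ hnd' ?_
      rcases hy with h | h
      · left
        intro hc
        have := Tm.fv_subst M x (toL t) hc
        simp at this
        rcases this with ⟨h1, _⟩ | h2
        · exact h h1
        · rcases hxt with rfl | hg
          · rw [toL_pvar] at h2; simp [Tm.fv] at h2; exact hxy (h2.symm ▸ rfl)
          · rw [gcon_toL_closed hg] at h2; simp at h2
      · right
        rcases List.mem_cons.mp h with h | h
        · exact absurd h.symm hxy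
        · exact h

theorem mix_psubst {t : PTm} (ht : Mix t) {u : PTm} (hu : GCon u) (y : ℕ) :
    Mix (psubst t y u) ∧ toL (psubst t y u) = Tm.subst (toL t) y (toL u) := by
  induction ht with
  | pvar z =>
    rw [psubst_pvar]
    by_cases hzy : z = y
    · refine ⟨by rw [if_pos hzy]; exact mix_of_gcon hu, ?_⟩
      simp [hzy, toL_pvar, Tm.subst]
    · refine ⟨by rw [if_neg hzy]; exact Mix.pvar z, ?_⟩
      simp [hzy, toL_pvar, Tm.subst]
  | papp hu' hv' ihu ihv =>
    rw [psubst_papp]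
    exact ⟨Mix.papp ihu.1 ihv.1, by
      rw [toL_papp, toL_papp, ihu.2, ihv.2]; rfl⟩
  | @con x M ts hf =>
    rw [psubst_con]
    constructor
    · refine Mix.con ?_
      rw [List.forall₂_map_right_iff]
      refine hf.imp ?_
      intro z t hzt
      rcases hzt with rfl | hg
      · rw [psubst_pvar]
        by_cases hzy : z = y
        · simp [hzy, hu]
        · simp [hzy]
      · rw [psubst_gcon hg]; exact Or.inr hg
    · rw [toL_con, toL_con, substList_lam (binder_not_mem_fvList x M),
        substList_lam (binder_not_mem_fvList x M)]
      by_cases hxy : x = y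
      · rw [Tm.subst, if_pos hxy]
        congr 2
        rw [List.map_map]
        refine List.map_congr_left fun t ht => ?_
        rcases forall₂_mem_right hf t ht with ⟨z, hz, rfl | hg⟩
        · simp only [Function.comp]
          rw [psubst_pvar, if_neg (fun h : z = y =>
            binder_not_mem_fvList x M ((hxy ▸ h) ▸ hz))]
        · simp only [Function.comp]; rw [psubst_gcon hg]
      · rw [Tm.subst, if_neg hxy]
        congr 1
        rw [List.map_map]
        have := core (y := y) hu (fvList (Tm.lam x M)) ts M (fvList_nodup _) hf ?_
        · have hmm : List.map (toL ∘ fun t => t.psubst y u) ts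
              = List.map (fun t => (t.psubst y u).toL) ts :=
            List.map_congr_left fun t _ => rfl
          rw [hmm, ← this]

        · by_cases hyM : y ∈ Tm.fv M
          · right
            rw [mem_fvList]
            simp [Tm.fv, hyM]
            exact fun h => hxy h.symm
          · left; exact hyM

theorem psubstList_nil (t : PTm) (us : List PTm) : psubstList t [] us = t := rfl
theorem psubstList_nil' (t : PTm) (xs : List ℕ) : psubstList t xs [] = t := by
  cases xs <;> rfl
theorem psubstList_cons (t : PTm) (x : ℕ) (xs : List ℕ) (u : PTm) (us : List PTm) :
    psubstList t (x :: xs) (u :: us) = psubstList (psubst t x u) xs us := rfl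

theorem mix_psubstList {t : PTm} (ht : Mix t) :
    ∀ (xs : List ℕ) (us : List PTm), (∀ u ∈ us, GCon u) →
    Mix (psubstList t xs us) ∧
      toL (psubstList t xs us) = substList (toL t) xs (us.map toL) := by
  intro xs
  induction xs generalizing t with
  | nil => intro us _; exact ⟨ht, by simp [psubstList_nil, substList_nil]⟩
  | cons x xs ih =>
    intro us hus
    cases us with
    | nil => exact ⟨ht, by simp [psubstList_nil', substList_nil']⟩
    | cons u us =>
      have hu : GCon u := hus u (by simp)
      obtain ⟨h1, h2⟩ := mix_psubst ht hu x
      rw [psubstList_cons, List.map_cons, substList_cons, ← h2]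
      exact ih h1 us (fun u hu' => hus u (by simp [hu']))

theorem pv_psubst_mix {t : PTm} (ht : Mix t) {u : PTm} (hu : GCon u) (y : ℕ) :
    pv (psubst t y u) ⊆ pv t \ {y} := by
  induction ht with
  | pvar z =>
    rw [psubst_pvar]
    by_cases hzy : z = y
    · simp [hzy, pv_gcon hu]
    · simp only [if_neg hzy, pv]
      intro w hw; simp at hw; simp [pv, hw, hzy]
  | papp hu' hv' ihu ihv =>
    rw [psubst_papp]
    intro w hw
    rw [pv] at hw ⊢
    simp only [Finset.mem_union] at hw
    rcases hw with h | h
    · have := ihu h; simp at this; simp [this]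
    · have := ihv h; simp at this; simp [this]
  | @con x M ts hf =>
    rw [psubst_con]
    intro w hw
    rw [mem_pv_con] at hw
    obtain ⟨t', ht', hwt⟩ := hw
    obtain ⟨t0, ht0, rfl⟩ := List.mem_map.mp ht'
    rcases forall₂_mem_right hf t0 ht0 with ⟨z, hz, rfl | hg⟩
    · rw [psubst_pvar] at hwt
      by_cases hzy : z = y
      · rw [if_pos hzy, pv_gcon hu] at hwt; simp at hwt
      · rw [if_neg hzy] at hwt
        have hwz : w = z := by simpa [pv] using hwt
        subst hwz
        simp only [Finset.mem_sdiff, Finset.mem_singleton]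
        exact ⟨mem_pv_con.mpr ⟨pvar w, ht0, by simp [pv]⟩, hzy⟩
    · rw [psubst_gcon hg, pv_gcon hg] at hwt; simp at hwt

theorem pv_psubstList_mix {t : PTm} (ht : Mix t) :
    ∀ (xs : List ℕ) (us : List PTm), (∀ u ∈ us, GCon u) → xs.length = us.length →
    pv (psubstList t xs us) ⊆ pv t \ xs.toFinset := by
  intro xs
  induction xs generalizing t with
  | nil => intro us _ _; simp [psubstList_nil]
  | cons x xs ih =>
    intro us hus hlen
    cases us with
    | nil => simp at hlen
    | cons u us =>
      have hu : GCon u := hus u (by simp)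
      rw [psubstList_cons]
      intro w hw
      have h1 := ih (mix_psubst ht hu x).1 us (fun u hu' => hus u (by simp [hu']))
        (by simpa using hlen) hw
      simp at h1
      have h2 := pv_psubst_mix ht hu x h1.1
      simp at h2
      simp [h2.1, h2.2, h1.2]

theorem mix_pv_can {t : PTm} (ht : Mix t) (hpv : pv t = ∅) : Can t := by
  induction ht with
  | pvar z => simp [pv] at hpv
  | papp hu' hv' ihu ihv =>
    rw [pv, Finset.union_eq_empty] at hpv
    exact Can.papp (ihu hpv.1) (ihv hpv.2)
  | @con x M ts hf =>
    refine Can.gcon (GCon.con hf.length_eq.symm ?_)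
    intro t' ht'
    rcases forall₂_mem_right hf t' ht' with ⟨z, hz, rfl | hg⟩
    · exfalso
      have : z ∈ pv (con x M ts) := mem_pv_con.mpr ⟨pvar z, ht', by simp [pv]⟩
      rw [hpv] at this; simp at this
    · exact hg

theorem pv_toP (M : Tm) : pv (toP M) ⊆ Tm.fv M := by
  induction M with
  | var x => simp [toP, pv, Tm.fv]
  | lam x P _ =>
    rw [toP]
    intro z hz
    rw [mem_pv_con] at hz
    obtain ⟨t, ht, hzt⟩ := hz
    obtain ⟨w, hw, rfl⟩ := List.mem_map.mp ht
    simp [pv] at hzt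
    subst hzt
    rw [mem_fvList] at hw
    exact hw
  | app P Q ihP ihQ =>
    rw [toP, pv, Tm.fv]
    exact Finset.union_subset_union ihP ihQ

theorem step_not_isConT {t t' : PTm} (h : Step t t') : ¬ IsConT t := by
  induction h with
  | beta => rintro ⟨⟩
  | appL _ _ => rintro ⟨⟩
  | appR _ _ => rintro ⟨⟩
  | @conArg x M t t' l r _ ih =>
    rintro ⟨hts⟩
    exact ih (hts t (by simp))

theorem gcon_normal {t : PTm} (h : GCon t) : NormalForm Step t :=
  fun ⟨_, hs⟩ => step_not_isConT hs (isConT_of_gCon h)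

theorem sim_beta_core {x : ℕ} {M : Tm} {ts : List PTm} {v : PTm}
    (hts : ∀ t ∈ ts, GCon t) (hlen : ts.length = (fvList (Tm.lam x M)).length)
    (hv : GCon v) :
    Can (psubstList (toP M) (fvList (Tm.lam x M) ++ [x]) (ts ++ [v])) ∧
      toL (psubstList (toP M) (fvList (Tm.lam x M) ++ [x]) (ts ++ [v]))
        = Tm.subst (substList M (fvList (Tm.lam x M)) (ts.map toL)) x (toL v) := by
  have hall : ∀ u ∈ ts ++ [v], GCon u := by
    intro u hu
    rcases List.mem_append.mp hu with h | h
    · exact hts u h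
    · simp at h; subst h; exact hv
  have hmix := mix_toP M
  obtain ⟨hmix', htoL⟩ := mix_psubstList hmix (fvList (Tm.lam x M) ++ [x]) (ts ++ [v]) hall
  constructor
  · refine mix_pv_can hmix' ?_
    have h1 := pv_psubstList_mix hmix (fvList (Tm.lam x M) ++ [x]) (ts ++ [v]) hall
      (by simp [hlen])
    refine Finset.eq_empty_of_forall_notMem fun z hz => ?_
    have h2 := h1 hz
    simp at h2
    have h3 := fv_sub_fvList x M (pv_toP M h2.1)
    simp at h3
    rcases h3 with h3 | h3
    · exact h2.2.1 h3
    · exact h2.2.2 h3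
  · rw [htoL, toL_toP, List.map_append]
    rw [substList_append (by simp [hlen]) M]
    rfl

theorem sim_C {t t' : PTm} (hcan : Can t) (hstep : Step t t') :
    Can t' ∧ Tm.Cbv (toL t) (toL t') := by
  induction hcan generalizing t' with
  | gcon h => exact absurd ⟨t', hstep⟩ (gcon_normal h)
  | @papp u v hu hv ihu ihv =>
    cases hstep with
    | beta hts0 hv0 hlen =>
      rename_i x M ts
      have hgu : GCon (con x M ts) := by
        cases hu with
        | gcon h => exact h
      have hgv : GCon v := by
        cases hv with
        | gcon h => exact h
        | papp h1 h2 => cases hv0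
      obtain ⟨hts', hlen'⟩ : (∀ t ∈ ts, GCon t) ∧ ts.length = (fvList (Tm.lam x M)).length := by
        cases hgu with
        | con hl ht => exact ⟨ht, hl⟩
      obtain ⟨hc, he⟩ := sim_beta_core hts' hlen' hgv
      refine ⟨hc, ?_⟩
      rw [he, toL_papp, toL_con, substList_lam (binder_not_mem_fvList x M)]
      exact Tm.Cbv.beta (gcon_toL_value hgv)
    | appL h =>
      obtain ⟨hc, hcbv⟩ := ihu h
      exact ⟨Can.papp hc hv, by rw [toL_papp, toL_papp]; exact Tm.Cbv.appL hcbv⟩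
    | appR h =>
      obtain ⟨hc, hcbv⟩ := ihv h
      exact ⟨Can.papp hu hc, by rw [toL_papp, toL_papp]; exact Tm.Cbv.appR hcbv⟩

theorem sim_B {t : PTm} (hcan : Can t) {M' : Tm} (hcbv : Tm.Cbv (toL t) M') :
    ∃ t', Step t t' ∧ Can t' ∧ toL t' = M' := by
  induction hcan generalizing M' with
  | gcon h =>
    obtain ⟨x, B, hB⟩ := (gcon_toL h).1
    rw [hB] at hcbv
    cases hcbv
  | @papp u v hu hv ihu ihv =>
    rw [toL_papp] at hcbv
    generalize hA : toL u = A at hcbv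
    cases hcbv with
    | @beta x M0 V hV =>
      have hgu : GCon u := by
        cases hu with
        | gcon h => exact h
        | papp h1 h2 => rw [toL_papp] at hA; exact Tm.noConfusion hA
      cases hgu with
      | @con x' M ts hlen hts =>
        rw [toL_con, substList_lam (binder_not_mem_fvList x' M)] at hA
        injection hA with e1 e2
        cases e1; cases e2
        have hgv : GCon v := by
          cases hv with
          | gcon h => exact h
          | papp h1 h2 => rw [toL_papp] at hV; simpa [Tm.IsValue] using hV
        obtain ⟨hc, he⟩ := sim_beta_core hts hlen hgv
        exact ⟨_, Step.beta (fun t ht => isConT_of_gCon (hts t ht))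
          (isConT_of_gCon hgv) hlen, hc, he⟩
    | appL h =>
      rw [← hA] at h
      obtain ⟨u', hs, hc, he⟩ := ihu h
      exact ⟨papp u' v, Step.appL hs, Can.papp hc hv, by rw [toL_papp, he]⟩
    | appR h =>
      obtain ⟨v', hs, hc, he⟩ := ihv h
      exact ⟨papp u v', Step.appR hs, Can.papp hu hc, by rw [toL_papp, he, hA]⟩

theorem can_toP {M : Tm} (h : Tm.Closed M) : Can (toP M) := by
  induction M with
  | var x => simp [Tm.Closed, Tm.fv] at h
  | lam x P _ =>
    have : fvList (Tm.lam x P) = [] := by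
      rw [fvList, h]; exact Finset.sort_empty _
    rw [toP, this]
    exact Can.gcon (GCon.con (by rw [this]; simp) (by simp))
  | app P Q ihP ihQ =>
    rw [Tm.Closed, Tm.fv, Finset.union_eq_empty] at h
    exact Can.papp (ihP h.1) (ihQ h.2)

theorem fwd {N : Tm} : ∀ (n : ℕ) (t : PTm), Can t → stepsN Tm.Cbv n (toL t) N →
    ∃ t', stepsN Step n t t' ∧ Can t' ∧ toL t' = N := by
  intro n
  induction n with
  | zero => intro t hc hs; exact ⟨t, rfl, hc, hs⟩
  | succ n ih =>
    intro t hc hs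
    obtain ⟨c, hstep, hrest⟩ := hs
    obtain ⟨t1, hs1, hc1, he1⟩ := sim_B hc hstep
    obtain ⟨t', hsn, hc', he'⟩ := ih t1 hc1 (he1 ▸ hrest)
    exact ⟨t', ⟨t1, hs1, hsn⟩, hc', he'⟩

theorem bwd : ∀ (n : ℕ) (t t' : PTm), Can t → stepsN Step n t t' →
    Can t' ∧ stepsN Tm.Cbv n (toL t) (toL t') := by
  intro n
  induction n with
  | zero => intro t t' hc hs; cases hs; exact ⟨hc, rfl⟩
  | succ n ih =>
    intro t t' hc hs
    obtain ⟨c, hstep, hrest⟩ := hs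
    obtain ⟨hc1, hcbv⟩ := sim_C hc hstep
    obtain ⟨hc', hsn⟩ := ih c t' hc1 hrest
    exact ⟨hc', ⟨toL c, hcbv, hsn⟩⟩

end PTm

/-- Term Reducibility: for a closed λ-term `M`,
`M →v^n N` with `N` a CBV normal form iff `⌊M⌋ →^n t` in Φ with `t` a
Φ-normal form and `⌈t⌉ = N`; the number of steps is exactly preserved. -/
theorem term_reducibility (M : Tm) (hM : Tm.Closed M) (n : ℕ) (N : Tm) :
    (stepsN Tm.Cbv n M N ∧ NormalForm Tm.Cbv N) ↔
      (∃ t : PTm, stepsN PTm.Step n (PTm.toP M) t ∧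
        NormalForm PTm.Step t ∧ PTm.toL t = N) := by
  have hcan := PTm.can_toP hM
  constructor
  · rintro ⟨hsteps, hNF⟩
    obtain ⟨t', hst, hc', he'⟩ := PTm.fwd n (PTm.toP M) hcan
      (by rw [PTm.toL_toP]; exact hsteps)
    refine ⟨t', hst, ?_, he'⟩
    rintro ⟨t'', hstep⟩
    exact hNF ⟨_, he' ▸ (PTm.sim_C hc' hstep).2⟩
  · rintro ⟨t, hst, hNF, rfl⟩
    obtain ⟨hc', hsteps⟩ := PTm.bwd n (PTm.toP M) t hcan hst
    rw [PTm.toL_toP] at hsteps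
    refine ⟨hsteps, ?_⟩
    rintro ⟨N', hcbv⟩
    obtain ⟨t'', hstep, _, _⟩ := PTm.sim_B hc' hcbv
    exact hNF ⟨t'', hstep⟩
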